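/- Fix a dictionary D ∈ ℝ^{d×n} of full row rank and a matrix A ∈ ℝ^{m×d} satisfying the D-null space property of order s. Fix an index set T with |T| ≤ s and a vector v ∈ ℝ^n with D v ∈ ker A \ {0}. For u ∈ ker D and t > 0 define f_v(u, t) = (1/t) · sup_{ũ ∈ ker D} ( ‖(t v + u)_{T^c}‖₁ − ‖(t v + u)_T + ũ‖₁ ). Then inf { f_v(u, t) : u ∈ ker D, t > 0 } > 0. -/

import Mathlib

open scoped BigOperators

section Defs

variable {𝕜 : Type*}

/-- ℓ¹ norm of a finitely-indexed vector. -/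
noncomputable def norm1 [RCLike 𝕜] {ι : Type*} [Fintype ι] (x : ι → 𝕜) : ℝ :=
  ∑ i, ‖x i‖

/-- ℓ² norm of a finitely-indexed vector. -/
noncomputable def norm2 [RCLike 𝕜] {ι : Type*} [Fintype ι] (x : ι → 𝕜) : ℝ :=
  Real.sqrt (∑ i, ‖x i‖ ^ 2)

/-- Restriction of a vector to an index set `T` (zero outside `T`). -/
def restr [Zero 𝕜] {ι : Type*} [DecidableEq ι] (T : Finset ι) (x : ι → 𝕜) : ι → 𝕜 :=
  fun i => if i ∈ T then x i else 0

/-- `x` has at most `s` nonzero entries. -/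
def sparse [Zero 𝕜] {ι : Type*} (s : ℕ) (x : ι → 𝕜) : Prop :=
  {i | x i ≠ 0}.ncard ≤ s

/-- Null space property of order `s`. -/
def NSP [RCLike 𝕜] {m : ℕ} {ι : Type*} [Fintype ι] [DecidableEq ι]
    (M : Matrix (Fin m) ι 𝕜) (s : ℕ) : Prop :=
  ∀ v : ι → 𝕜, M.mulVec v = 0 → v ≠ 0 →
    ∀ T : Finset ι, T.card ≤ s → norm1 (restr T v) < norm1 (restr Tᶜ v)

/-- `D`-null space property of order `s`. -/
def DNSP [RCLike 𝕜] {m d : ℕ} {ι : Type*} [Fintype ι] [DecidableEq ι]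
    (A : Matrix (Fin m) (Fin d) 𝕜) (D : Matrix (Fin d) ι 𝕜) (s : ℕ) : Prop :=
  ∀ T : Finset ι, T.card ≤ s →
    ∀ v : ι → 𝕜, A.mulVec (D.mulVec v) = 0 → D.mulVec v ≠ 0 →
      ∃ u : ι → 𝕜, D.mulVec u = 0 ∧ norm1 (restr T v + u) < norm1 (restr Tᶜ v)

/-- Strong `D`-null space property of order `s` with constant `c`. -/
def SNSPc [RCLike 𝕜] {m d : ℕ} {ι : Type*} [Fintype ι] [DecidableEq ι]
    (A : Matrix (Fin m) (Fin d) 𝕜) (D : Matrix (Fin d) ι 𝕜) (s : ℕ) (c : ℝ) : Prop :=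
  ∀ v : ι → 𝕜, A.mulVec (D.mulVec v) = 0 →
    ∀ T : Finset ι, T.card ≤ s →
      ∃ u : ι → 𝕜, D.mulVec u = 0 ∧
        c * norm2 (D.mulVec v) ≤ norm1 (restr Tᶜ v) - norm1 (restr T v + u)

/-- Smallest positive singular value of a matrix: the infimum of the set of positive `σ`
such that `σ²` is an eigenvalue of `Mᴴ M`. -/
noncomputable def nuSV [RCLike 𝕜] {κ ι : Type*} [Fintype κ] [Fintype ι]
    (M : Matrix κ ι 𝕜) : ℝ :=
  sInf {σ : ℝ | 0 < σ ∧ ∃ v : ι → 𝕜, v ≠ 0 ∧ (M.conjTranspose * M).mulVec v = ((σ : 𝕜) ^ 2) • v}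

/-- ℓ¹ error of the best `s`-term approximation. -/
noncomputable def sigmaS [RCLike 𝕜] {ι : Type*} [Fintype ι] (s : ℕ) (x : ι → 𝕜) : ℝ :=
  sInf {r : ℝ | ∃ v : ι → 𝕜, sparse s v ∧ r = norm1 (x - v)}

/-- Spectral norm (ℓ² → ℓ² operator norm). -/
noncomputable def specNorm [RCLike 𝕜] {m d : ℕ} (A : Matrix (Fin m) (Fin d) 𝕜) : ℝ :=
  sSup {r : ℝ | ∃ x : Fin d → 𝕜, norm2 x ≤ 1 ∧ r = norm2 (A.mulVec x)}

/-- ℓ¹ → ℓ² operator norm: the maximal ℓ² norm of a column. -/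
noncomputable def norm12 [RCLike 𝕜] {d : ℕ} {ι : Type*} [Fintype ι]
    (M : Matrix (Fin d) ι 𝕜) : ℝ :=
  sSup {r : ℝ | ∃ j : ι, r = norm2 (fun i => M i j)}

end Defs


section StmtNineteenAux

open Matrix

private lemma norm1_nonneg' {n : ℕ} (x : Fin n → ℝ) : 0 ≤ norm1 x :=
  Finset.sum_nonneg fun _ _ => norm_nonneg _

private lemma sgn_dot_le {n : ℕ} (S : Finset (Fin n)) (σ : Fin n → Bool) (x : Fin n → ℝ) :
    restr S (fun i => if σ i then (1:ℝ) else -1) ⬝ᵥ x ≤ norm1 (restr S x) := by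
  unfold norm1 restr dotProduct
  apply Finset.sum_le_sum
  intro i _
  by_cases h : i ∈ S
  · simp only [if_pos h, Real.norm_eq_abs]
    rcases Bool.dichotomy (σ i) with hσ | hσ
    · rw [hσ]
      norm_num
      exact neg_le_abs (x i)
    · rw [hσ]
      norm_num
      exact le_abs_self (x i)
  · simp [if_neg h]

private lemma sgn_dot_eq {n : ℕ} (S : Finset (Fin n)) (x : Fin n → ℝ) :
    ∃ σ : Fin n → Bool, restr S (fun i => if σ i then (1:ℝ) else -1) ⬝ᵥ x = norm1 (restr S x) := by
  classical
  refine ⟨fun i => decide (0 ≤ x i), ?_⟩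
  unfold norm1 restr dotProduct
  apply Finset.sum_congr rfl
  intro i _
  by_cases h : i ∈ S
  · simp only [if_pos h, Real.norm_eq_abs]
    by_cases hx : 0 ≤ x i
    · simp [hx, abs_of_nonneg hx]
    · simp [hx, abs_of_neg (lt_of_not_ge hx)]
  · simp [if_neg h]

private lemma restr_add' {n : ℕ} (S : Finset (Fin n)) (x y : Fin n → ℝ) :
    restr S (x + y) = restr S x + restr S y := by
  funext i; unfold restr; by_cases h : i ∈ S <;> simp [h]

private lemma restr_smul' {n : ℕ} (S : Finset (Fin n)) (t : ℝ) (x : Fin n → ℝ) :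
    restr S (t • x) = t • restr S x := by
  funext i; unfold restr; by_cases h : i ∈ S <;> simp [h]

private lemma dot_restr' {n : ℕ} (S : Finset (Fin n)) (c x : Fin n → ℝ) :
    c ⬝ᵥ restr S x = restr S c ⬝ᵥ x := by
  unfold restr dotProduct
  apply Finset.sum_congr rfl
  intro i _
  by_cases h : i ∈ S <;> simp [h]

private lemma restr_univ' {n : ℕ} (x : Fin n → ℝ) : restr Finset.univ x = x := by
  funext i; unfold restr; simp

private lemma norm1_smul' {n : ℕ} (t : ℝ) (ht : 0 ≤ t) (x : Fin n → ℝ) :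
    norm1 (t • x) = t * norm1 x := by
  unfold norm1
  rw [Finset.mul_sum]
  apply Finset.sum_congr rfl
  intro i _
  simp [Pi.smul_apply, norm_smul, Real.norm_eq_abs, abs_of_nonneg ht]

private lemma sInf_smul_set (t : ℝ) (ht : 0 < t) (s : Set ℝ) (hne : s.Nonempty) (hbd : BddBelow s) :
    sInf ((fun r => t * r) '' s) = t * sInf s := by
  obtain ⟨L, hL⟩ := hbd
  have hbd' : BddBelow ((fun r => t * r) '' s) := by
    refine ⟨t * L, ?_⟩
    rintro r ⟨x, hx, rfl⟩
    exact mul_le_mul_of_nonneg_left (hL hx) ht.le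
  apply le_antisymm
  · have h1 : ∀ x ∈ s, t⁻¹ * sInf ((fun r => t * r) '' s) ≤ x := by
      intro x hx
      have h2 : sInf ((fun r => t * r) '' s) ≤ t * x := csInf_le hbd' ⟨x, hx, rfl⟩
      calc t⁻¹ * sInf ((fun r => t * r) '' s) ≤ t⁻¹ * (t * x) :=
            mul_le_mul_of_nonneg_left h2 (by positivity)
        _ = x := by field_simp
    have h3 : t⁻¹ * sInf ((fun r => t * r) '' s) ≤ sInf s := le_csInf hne h1
    calc sInf ((fun r => t * r) '' s) = t * (t⁻¹ * sInf ((fun r => t * r) '' s)) := by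
          field_simp
      _ ≤ t * sInf s := mul_le_mul_of_nonneg_left h3 ht.le
  · apply le_csInf (hne.image _)
    rintro r ⟨x, hx, rfl⟩
    exact mul_le_mul_of_nonneg_left (csInf_le ⟨L, hL⟩ hx) ht.le


private noncomputable def fmμ (p nn : ℝ) : ℝ := -nn / (p - nn)
private noncomputable def fmν (p nn : ℝ) : ℝ := p / (p - nn)

private lemma fm_step {q k : ℕ} {ι : Type} [Fintype ι] [Nonempty ι]
    (a : ι → Fin q → ℝ) (α : ι → Fin (k+1) → ℝ) (b : ι → ℝ)
    (hyp : ∀ (y : Fin q → ℝ) (t : Fin (k+1) → ℝ), ∃ i, 0 ≤ a i ⬝ᵥ y + α i ⬝ᵥ t + b i) :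
    ∃ (κ : Type) (_ : Fintype κ) (a' : κ → Fin q → ℝ) (α' : κ → Fin k → ℝ) (b' : κ → ℝ),
      (∀ (y : Fin q → ℝ) (s : ℝ) (t' : Fin k → ℝ) (j : κ), ∃ i,
        a' j ⬝ᵥ y + α' j ⬝ᵥ t' + b' j
          ≤ a i ⬝ᵥ y + α i ⬝ᵥ (Fin.cons s t' : Fin (k+1) → ℝ) + b i) ∧
      (∀ (y : Fin q → ℝ) (t' : Fin k → ℝ), ∃ (s : ℝ) (j : κ), ∀ i,
        a i ⬝ᵥ y + α i ⬝ᵥ (Fin.cons s t' : Fin (k+1) → ℝ) + b i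
          ≤ a' j ⬝ᵥ y + α' j ⬝ᵥ t' + b' j) := by
  classical
  have hconv1 : ∀ (m nn X Y : ℝ), 0 ≤ m → m + nn = 1 → X ≤ Y → m * X + nn * Y ≤ Y := by
    intro m nn X Y hm h1 hXY
    have h2 := mul_le_mul_of_nonneg_left hXY hm
    have h3 : m * Y + nn * Y = Y := by rw [← add_mul, h1, one_mul]
    linarith
  have hconv2 : ∀ (m nn X Y : ℝ), 0 ≤ nn → m + nn = 1 → Y ≤ X → m * X + nn * Y ≤ X := by
    intro m nn X Y hn h1 hYX
    have h2 := mul_le_mul_of_nonneg_left hYX hn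
    have h3 : m * X + nn * X = X := by rw [← add_mul, h1, one_mul]
    linarith
  -- the "constant part" of each affine functional (coefficient-free in s)
  set RR : ι → (Fin q → ℝ) → (Fin k → ℝ) → ℝ :=
    fun i y t' => a i ⬝ᵥ y + Fin.tail (α i) ⬝ᵥ t' + b i with hRR
  have hsplit : ∀ i (y : Fin q → ℝ) (s : ℝ) (t' : Fin k → ℝ),
      a i ⬝ᵥ y + α i ⬝ᵥ (Fin.cons s t' : Fin (k+1) → ℝ) + b i = RR i y t' + α i 0 * s := by
    intro i y s t'
    have h : α i ⬝ᵥ (Fin.cons s t' : Fin (k+1) → ℝ) = α i 0 * s + Fin.tail (α i) ⬝ᵥ t' := by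
      simp [dotProduct, Fin.sum_univ_succ, Fin.tail]
    rw [h, hRR]; ring
  -- genuine element existence
  have hGen : (∃ i, α i 0 = 0) ∨ ((∃ i, 0 < α i 0) ∧ (∃ i, α i 0 < 0)) := by
    by_contra hcon
    push_neg at hcon
    obtain ⟨h0, h2⟩ := hcon
    by_cases hp : ∃ i, 0 < α i 0
    · have hallp : ∀ i, 0 < α i 0 := by
        intro i
        rcases lt_trichotomy (α i 0) 0 with h | h | h
        · linarith [h2 hp i]
        · exact absurd h (h0 i)
        · exact h
      set s0 := Finset.univ.inf' Finset.univ_nonempty (fun i => (-1 - b i) / α i 0) with hs0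
      obtain ⟨i, hi⟩ := hyp 0 (Fin.cons s0 0)
      rw [hsplit] at hi
      have h1 : s0 ≤ (-1 - b i) / α i 0 := Finset.inf'_le _ (Finset.mem_univ i)
      have h2' : α i 0 * s0 ≤ -1 - b i := by
        have hh := mul_le_mul_of_nonneg_left h1 (hallp i).le
        rwa [mul_div_cancel₀ _ (hallp i).ne'] at hh
      have h3 : RR i 0 0 = b i := by simp [hRR]
      rw [h3] at hi
      linarith
    · have halln : ∀ i, α i 0 < 0 := by
        intro i
        rcases lt_trichotomy (α i 0) 0 with h | h | h
        · exact h
        · exact absurd h (h0 i)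
        · exact absurd ⟨i, h⟩ hp
      set s0 := Finset.univ.sup' Finset.univ_nonempty (fun i => (-1 - b i) / α i 0) with hs0
      obtain ⟨i, hi⟩ := hyp 0 (Fin.cons s0 0)
      rw [hsplit] at hi
      have h1 : (-1 - b i) / α i 0 ≤ s0 := by
        rw [hs0]
        exact Finset.le_sup' (fun i => (-1 - b i) / α i 0) (Finset.mem_univ i)
      have h2' : α i 0 * s0 ≤ -1 - b i := by
        have hh := mul_le_mul_of_nonpos_left h1 (halln i).le
        rwa [mul_div_cancel₀ _ (halln i).ne] at hh
      have h3 : RR i 0 0 = b i := by simp [hRR]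
      rw [h3] at hi
      linarith
  -- properties of the crossing weights
  have hμν : ∀ i j, 0 < α i 0 → α j 0 < 0 →
      0 ≤ fmμ (α i 0) (α j 0) ∧ 0 ≤ fmν (α i 0) (α j 0) ∧
        fmμ (α i 0) (α j 0) + fmν (α i 0) (α j 0) = 1 := by
    intro i j hi hj
    have hd : 0 < α i 0 - α j 0 := by linarith
    refine ⟨div_nonneg (by linarith) hd.le, div_nonneg hi.le hd.le, ?_⟩
    unfold fmμ fmν
    field_simp
    ring
  have hcrossval : ∀ i j, 0 < α i 0 → α j 0 < 0 → ∀ (y : Fin q → ℝ) (s : ℝ) (t' : Fin k → ℝ),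
      (fmμ (α i 0) (α j 0) • a i + fmν (α i 0) (α j 0) • a j) ⬝ᵥ y
        + (fmμ (α i 0) (α j 0) • Fin.tail (α i) + fmν (α i 0) (α j 0) • Fin.tail (α j)) ⬝ᵥ t'
        + (fmμ (α i 0) (α j 0) * b i + fmν (α i 0) (α j 0) * b j)
      = fmμ (α i 0) (α j 0) * (RR i y t' + α i 0 * s)
        + fmν (α i 0) (α j 0) * (RR j y t' + α j 0 * s) := by
    intro i j hi hj y s t'
    have hd : α i 0 - α j 0 ≠ 0 := by
      have : (0:ℝ) < α i 0 - α j 0 := by linarith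
      exact this.ne'
    have hz : fmμ (α i 0) (α j 0) * α i 0 + fmν (α i 0) (α j 0) * α j 0 = 0 := by
      unfold fmμ fmν
      field_simp
      ring
    have hexp : fmμ (α i 0) (α j 0) * (RR i y t' + α i 0 * s)
        + fmν (α i 0) (α j 0) * (RR j y t' + α j 0 * s)
        = fmμ (α i 0) (α j 0) * RR i y t' + fmν (α i 0) (α j 0) * RR j y t'
          + (fmμ (α i 0) (α j 0) * α i 0 + fmν (α i 0) (α j 0) * α j 0) * s := by ring
    rw [hexp, hz, zero_mul, add_zero, hRR]
    simp only [add_dotProduct, smul_dotProduct, smul_eq_mul]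
    ring
  -- fallback element
  have hfall : ∃ e : (Fin q → ℝ) × (Fin k → ℝ) × ℝ, ∀ (y : Fin q → ℝ) (s : ℝ) (t' : Fin k → ℝ),
      ∃ i, e.1 ⬝ᵥ y + e.2.1 ⬝ᵥ t' + e.2.2 ≤ RR i y t' + α i 0 * s := by
    rcases hGen with ⟨i0, hi0⟩ | ⟨⟨ip, hip⟩, ⟨iq, hiq⟩⟩
    · refine ⟨(a i0, Fin.tail (α i0), b i0), fun y s t' => ⟨i0, ?_⟩⟩
      rw [hi0, zero_mul, add_zero]
    · refine ⟨(fmμ (α ip 0) (α iq 0) • a ip + fmν (α ip 0) (α iq 0) • a iq,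
        fmμ (α ip 0) (α iq 0) • Fin.tail (α ip) + fmν (α ip 0) (α iq 0) • Fin.tail (α iq),
        fmμ (α ip 0) (α iq 0) * b ip + fmν (α ip 0) (α iq 0) * b iq), fun y s t' => ?_⟩
      have h := hcrossval ip iq hip hiq y s t'
      obtain ⟨hμ0, hν0, hμν1⟩ := hμν ip iq hip hiq
      rcases le_total (RR ip y t' + α ip 0 * s) (RR iq y t' + α iq 0 * s) with hle | hle
      · exact ⟨iq, by rw [h]; exact hconv1 _ _ _ _ hμ0 hμν1 hle⟩
      · exact ⟨ip, by rw [h]; exact hconv2 _ _ _ _ hν0 hμν1 hle⟩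
  obtain ⟨e0, he0⟩ := hfall
  -- the new family
  set g : (ι ⊕ ι × ι) → (Fin q → ℝ) × (Fin k → ℝ) × ℝ := fun z =>
    match z with
    | Sum.inl i => if α i 0 = 0 then (a i, Fin.tail (α i), b i) else e0
    | Sum.inr (i, j) => if 0 < α i 0 ∧ α j 0 < 0 then
        (fmμ (α i 0) (α j 0) • a i + fmν (α i 0) (α j 0) • a j,
         fmμ (α i 0) (α j 0) • Fin.tail (α i) + fmν (α i 0) (α j 0) • Fin.tail (α j),
         fmμ (α i 0) (α j 0) * b i + fmν (α i 0) (α j 0) * b j)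
      else e0
    with hg
  have hK1 : ∀ (z : ι ⊕ ι × ι) (y : Fin q → ℝ) (s : ℝ) (t' : Fin k → ℝ), ∃ i,
      (g z).1 ⬝ᵥ y + (g z).2.1 ⬝ᵥ t' + (g z).2.2 ≤ RR i y t' + α i 0 * s := by
    intro z y s t'
    rcases z with i | ⟨i, j⟩
    · by_cases h : α i 0 = 0
      · refine ⟨i, ?_⟩
        simp only [hg, if_pos h]
        rw [h, zero_mul, add_zero]
      · simp only [hg, if_neg h]
        exact he0 y s t'
    · by_cases h : 0 < α i 0 ∧ α j 0 < 0
      · obtain ⟨h1, h2⟩ := h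
        have hval := hcrossval i j h1 h2 y s t'
        obtain ⟨hμ0, hν0, hμν1⟩ := hμν i j h1 h2
        simp only [hg, if_pos (show 0 < α i 0 ∧ α j 0 < 0 from ⟨h1, h2⟩)]
        rcases le_total (RR i y t' + α i 0 * s) (RR j y t' + α j 0 * s) with hle | hle
        · exact ⟨j, by rw [hval]; exact hconv1 _ _ _ _ hμ0 hμν1 hle⟩
        · exact ⟨i, by rw [hval]; exact hconv2 _ _ _ _ hν0 hμν1 hle⟩
      · simp only [hg, if_neg h]
        exact he0 y s t'
  haveI : Nonempty (ι ⊕ ι × ι) := ⟨Sum.inl (Classical.arbitrary ι)⟩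
  have hK2 : ∀ (y : Fin q → ℝ) (t' : Fin k → ℝ), ∃ (s : ℝ) (z : ι ⊕ ι × ι), ∀ i,
      RR i y t' + α i 0 * s ≤ (g z).1 ⬝ᵥ y + (g z).2.1 ⬝ᵥ t' + (g z).2.2 := by
    intro y t'
    set M := Finset.univ.sup' Finset.univ_nonempty
      (fun z : ι ⊕ ι × ι => (g z).1 ⬝ᵥ y + (g z).2.1 ⬝ᵥ t' + (g z).2.2) with hM
    obtain ⟨z0, -, hz0⟩ := Finset.exists_mem_eq_sup' Finset.univ_nonempty
      (fun z : ι ⊕ ι × ι => (g z).1 ⬝ᵥ y + (g z).2.1 ⬝ᵥ t' + (g z).2.2)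
    rw [← hM] at hz0
    have hzero : ∀ i, α i 0 = 0 → RR i y t' ≤ M := by
      intro i h
      have hle := Finset.le_sup' (fun z : ι ⊕ ι × ι =>
        (g z).1 ⬝ᵥ y + (g z).2.1 ⬝ᵥ t' + (g z).2.2) (Finset.mem_univ (Sum.inl i))
      rw [← hM] at hle
      have hgi : (g (Sum.inl i)).1 ⬝ᵥ y + (g (Sum.inl i)).2.1 ⬝ᵥ t' + (g (Sum.inl i)).2.2
          = RR i y t' := by
        simp only [hg, if_pos h, hRR]
      rwa [hgi] at hle
    have hcrossle : ∀ i j, 0 < α i 0 → α j 0 < 0 →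
        fmμ (α i 0) (α j 0) * RR i y t' + fmν (α i 0) (α j 0) * RR j y t' ≤ M := by
      intro i j h1 h2
      have hle := Finset.le_sup' (fun z : ι ⊕ ι × ι =>
        (g z).1 ⬝ᵥ y + (g z).2.1 ⬝ᵥ t' + (g z).2.2) (Finset.mem_univ (Sum.inr (i, j)))
      rw [← hM] at hle
      have hval := hcrossval i j h1 h2 y 0 t'
      have hgi : (g (Sum.inr (i, j))).1 ⬝ᵥ y + (g (Sum.inr (i, j))).2.1 ⬝ᵥ t'
          + (g (Sum.inr (i, j))).2.2
          = fmμ (α i 0) (α j 0) * RR i y t' + fmν (α i 0) (α j 0) * RR j y t' := by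
        simp only [hg, if_pos (show 0 < α i 0 ∧ α j 0 < 0 from ⟨h1, h2⟩)]
        rw [hval]; ring
      rwa [hgi] at hle
    set Pos := Finset.univ.filter (fun i => 0 < α i 0) with hPos
    set Neg := Finset.univ.filter (fun i => α i 0 < 0) with hNeg
    by_cases hP : Pos.Nonempty
    · set s := Pos.inf' hP (fun i => (M - RR i y t') / α i 0) with hs
      obtain ⟨i0, hi0P, hi0⟩ := Finset.exists_mem_eq_inf' hP (fun i => (M - RR i y t') / α i 0)
      have hi0pos : 0 < α i0 0 := (Finset.mem_filter.mp hi0P).2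
      refine ⟨s, z0, fun i => le_of_le_of_eq ?_ hz0⟩
      rcases lt_trichotomy (α i 0) 0 with hn | h0 | hp
      · -- negative slope: use crossing with i0
        have hcr := hcrossle i0 i hi0pos hn
        have hPQ : (0:ℝ) < α i0 0 - α i 0 := by linarith
        have heq : fmμ (α i0 0) (α i 0) * RR i0 y t' + fmν (α i0 0) (α i 0) * RR i y t'
            = (α i0 0 * RR i y t' - α i 0 * RR i0 y t') / (α i0 0 - α i 0) := by
          unfold fmμ fmν
          field_simp
          ring
        rw [heq] at hcr
        have h1 : α i0 0 * RR i y t' - α i 0 * RR i0 y t' ≤ M * (α i0 0 - α i 0) :=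
          (div_le_iff₀ hPQ).mp hcr
        have hseq : s = (M - RR i0 y t') / α i0 0 := by rw [hs, hi0]
        rw [hseq]
        have h3 : α i 0 * ((M - RR i0 y t') / α i0 0) ≤ M - RR i y t' := by
          rw [← mul_div_assoc, div_le_iff₀ hi0pos]
          nlinarith [h1]
        linarith
      · rw [h0, zero_mul, add_zero]
        exact hzero i h0
      · have hiP : i ∈ Pos := by rw [hPos]; exact Finset.mem_filter.mpr ⟨Finset.mem_univ i, hp⟩
        have h1 : s ≤ (M - RR i y t') / α i 0 := by
          rw [hs]; exact Finset.inf'_le _ hiP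
        have h2 : α i 0 * s ≤ M - RR i y t' := by
          have hh := mul_le_mul_of_nonneg_left h1 hp.le
          rwa [mul_div_cancel₀ _ hp.ne'] at hh
        linarith
    · by_cases hNn : Neg.Nonempty
      · set s := Neg.sup' hNn (fun i => (M - RR i y t') / α i 0) with hs
        refine ⟨s, z0, fun i => le_of_le_of_eq ?_ hz0⟩
        rcases lt_trichotomy (α i 0) 0 with hn | h0 | hp
        · have hiN : i ∈ Neg := by rw [hNeg]; exact Finset.mem_filter.mpr ⟨Finset.mem_univ i, hn⟩
          have h1 : (M - RR i y t') / α i 0 ≤ s := by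
            rw [hs]
            exact Finset.le_sup' (fun i => (M - RR i y t') / α i 0) hiN
          have h2 : α i 0 * s ≤ M - RR i y t' := by
            have hh := mul_le_mul_of_nonpos_left h1 hn.le
            rwa [mul_div_cancel₀ _ hn.ne] at hh
          linarith
        · rw [h0, zero_mul, add_zero]
          exact hzero i h0
        · exact absurd ⟨i, by rw [hPos]; exact Finset.mem_filter.mpr ⟨Finset.mem_univ i, hp⟩⟩ hP
      · refine ⟨0, z0, fun i => le_of_le_of_eq ?_ hz0⟩
        have h0 : α i 0 = 0 := by
          rcases lt_trichotomy (α i 0) 0 with h | h | h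
          · exact absurd ⟨i, by rw [hNeg]; exact Finset.mem_filter.mpr ⟨Finset.mem_univ i, h⟩⟩ hNn
          · exact h
          · exact absurd ⟨i, by rw [hPos]; exact Finset.mem_filter.mpr ⟨Finset.mem_univ i, h⟩⟩ hP
        rw [h0, zero_mul, add_zero]
        exact hzero i h0
  refine ⟨ι ⊕ ι × ι, inferInstance, fun z => (g z).1, fun z => (g z).2.1, fun z => (g z).2.2,
    ?_, ?_⟩
  · intro y s t' j
    obtain ⟨i, hi⟩ := hK1 j y s t'
    refine ⟨i, ?_⟩
    rw [hsplit]
    exact hi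
  · intro y t'
    obtain ⟨s, z, hall⟩ := hK2 y t'
    refine ⟨s, z, fun i => ?_⟩
    rw [hsplit]
    exact hall i

private lemma fm_lemma : ∀ (k q : ℕ) (ι : Type) [Fintype ι]
    (a : ι → Fin q → ℝ) (α : ι → Fin k → ℝ) (b : ι → ℝ),
    (∀ (y : Fin q → ℝ) (t : Fin k → ℝ), ∃ i, 0 ≤ a i ⬝ᵥ y + α i ⬝ᵥ t + b i) →
    ∃ (N : ℕ) (c : Fin N → Fin q → ℝ) (e : Fin N → ℝ),
      (∀ (y : Fin q → ℝ) (t : Fin k → ℝ) (j : Fin N), ∃ i,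
        c j ⬝ᵥ y + e j ≤ a i ⬝ᵥ y + α i ⬝ᵥ t + b i) ∧
      (∀ y : Fin q → ℝ, ∃ (t : Fin k → ℝ) (j : Fin N), ∀ i,
        a i ⬝ᵥ y + α i ⬝ᵥ t + b i ≤ c j ⬝ᵥ y + e j) := by
  intro k
  induction k with
  | zero =>
      intro q ι instF a α b hyp
      haveI : Nonempty ι := ⟨(hyp 0 0).choose⟩
      refine ⟨Fintype.card ι, fun j => a ((Fintype.equivFin ι).symm j),
        fun j => b ((Fintype.equivFin ι).symm j), ?_, ?_⟩
      · intro y t j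
        refine ⟨(Fintype.equivFin ι).symm j, le_of_eq ?_⟩
        have h1 : α ((Fintype.equivFin ι).symm j) ⬝ᵥ t = 0 := by
          simp [dotProduct]
        rw [h1, add_zero]
      · intro y
        obtain ⟨i0, -, h0⟩ := Finset.exists_mem_eq_sup' Finset.univ_nonempty
          (fun i => a i ⬝ᵥ y + b i)
        refine ⟨0, Fintype.equivFin ι i0, fun i => ?_⟩
        have h1 : α i ⬝ᵥ (0 : Fin 0 → ℝ) = 0 := by simp [dotProduct]
        have h2 := Finset.le_sup' (fun i => a i ⬝ᵥ y + b i) (Finset.mem_univ i)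
        rw [h0] at h2
        simpa [h1] using h2
  | succ k ih =>
      intro q ι instF a α b hyp
      haveI : Nonempty ι := ⟨(hyp 0 0).choose⟩
      obtain ⟨κ, instκ, a', α', b', hc1, hc2⟩ := fm_step a α b hyp
      haveI := instκ
      have hyp' : ∀ (y : Fin q → ℝ) (t' : Fin k → ℝ), ∃ z,
          0 ≤ a' z ⬝ᵥ y + α' z ⬝ᵥ t' + b' z := by
        intro y t'
        obtain ⟨s, j, hall⟩ := hc2 y t'
        obtain ⟨i, hi⟩ := hyp y (Fin.cons s t')
        exact ⟨j, le_trans hi (hall i)⟩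
      obtain ⟨N, c, e, H1, H2⟩ := ih q κ a' α' b' hyp'
      refine ⟨N, c, e, ?_, ?_⟩
      · intro y t j
        obtain ⟨z, hz⟩ := H1 y (Fin.tail t) j
        obtain ⟨i, hi⟩ := hc1 y (t 0) (Fin.tail t) z
        rw [Fin.cons_self_tail t] at hi
        exact ⟨i, le_trans hz hi⟩
      · intro y
        obtain ⟨t', j, hall2⟩ := H2 y
        obtain ⟨s, z, hallz⟩ := hc2 y t'
        exact ⟨Fin.cons s t', j, fun i => le_trans (hallz i) (hall2 z)⟩

end StmtNineteenAux

open Matrix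

/-- under `D`-NSP, the infimum of `f_v(u, t)` over `u ∈ ker D` and `t > 0`
is strictly positive. -/
theorem stmt19 {m d n s : ℕ}
    (A : Matrix (Fin m) (Fin d) ℝ) (D : Matrix (Fin d) (Fin n) ℝ)
    (hD : Function.Surjective D.mulVec)
    (hDNSP : DNSP A D s)
    (T : Finset (Fin n)) (hT : T.card ≤ s)
    (v : Fin n → ℝ) (hv : A.mulVec (D.mulVec v) = 0) (hv0 : D.mulVec v ≠ 0) :
    0 < sInf {r : ℝ | ∃ u : Fin n → ℝ, ∃ t : ℝ, D.mulVec u = 0 ∧ 0 < t ∧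
      r = (1 / t) * sSup {q : ℝ | ∃ ut : Fin n → ℝ, D.mulVec ut = 0 ∧
        q = norm1 (restr Tᶜ (t • v + u)) - norm1 (restr T (t • v + u) + ut)}} := by
  classical
  have univNe : ∀ x : Fin n → ℝ, restr Finset.univ x = x := restr_univ'
  -- kernel projection setup
  set Kker : Submodule ℝ (Fin n → ℝ) := LinearMap.ker (Matrix.mulVecLin D) with hKker
  obtain ⟨K', hcompl⟩ := Submodule.exists_isCompl Kker
  set Mlin : (Fin n → ℝ) →ₗ[ℝ] (Fin n → ℝ) :=
    Kker.subtype.comp (Kker.linearProjOfIsCompl K' hcompl) with hMlin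
  set Mm : Matrix (Fin n) (Fin n) ℝ := LinearMap.toMatrix' Mlin with hMmdef
  have hMm : ∀ x, Mm.mulVec x = Mlin x := by
    intro x
    rw [hMmdef, ← Matrix.toLin'_apply, Matrix.toLin'_toMatrix']
  have hMker : ∀ x, D.mulVec (Mm.mulVec x) = 0 := by
    intro x
    rw [hMm]
    have hmem : Mlin x ∈ Kker := by
      rw [hMlin]
      exact (Kker.linearProjOfIsCompl K' hcompl x).2
    rw [hKker, LinearMap.mem_ker] at hmem
    rwa [Matrix.mulVecLin_apply] at hmem
  have hMsur : ∀ u : Fin n → ℝ, D.mulVec u = 0 → Mlin u = u := by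
    intro u hu
    have hmem : u ∈ Kker := by
      rw [hKker, LinearMap.mem_ker, Matrix.mulVecLin_apply]
      exact hu
    have h1 := Submodule.linearProjOfIsCompl_apply_left hcompl ⟨u, hmem⟩
    rw [hMlin]
    show ((Kker.linearProjOfIsCompl K' hcompl u : Kker) : Fin n → ℝ) = u
    have h2 : Kker.linearProjOfIsCompl K' hcompl u = ⟨u, hmem⟩ := h1
    rw [h2]
  -- FM representation of the distance to the kernel
  have happ1 : ∀ (y : Fin n → ℝ) (t : Fin n → ℝ), ∃ σ : Fin n → Bool,
      0 ≤ ((fun i => if σ i then (1:ℝ) else -1) ⬝ᵥ y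
        + Mm.vecMul (fun i => if σ i then (1:ℝ) else -1) ⬝ᵥ t + 0) := by
    intro y t
    obtain ⟨σ, hσ⟩ := sgn_dot_eq Finset.univ (y + Mm.mulVec t)
    rw [univNe, univNe] at hσ
    refine ⟨σ, ?_⟩
    rw [add_zero, ← Matrix.dotProduct_mulVec, ← dotProduct_add, hσ]
    exact norm1_nonneg' _
  obtain ⟨N, cc, dd, R1, R2⟩ := fm_lemma n n (Fin n → Bool)
    (fun σ => fun i => if σ i then (1:ℝ) else -1)
    (fun σ => Mm.vecMul (fun i => if σ i then (1:ℝ) else -1)) (fun _ => 0) happ1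
  have R1' : ∀ (y t : Fin n → ℝ) (j : Fin N), cc j ⬝ᵥ y + dd j ≤ norm1 (y + Mm.mulVec t) := by
    intro y t j
    obtain ⟨σ, hσ⟩ := R1 y t j
    rw [add_zero, ← Matrix.dotProduct_mulVec, ← dotProduct_add] at hσ
    refine hσ.trans ?_
    have := sgn_dot_le Finset.univ σ (y + Mm.mulVec t)
    rwa [univNe, univNe] at this
  have R2' : ∀ y : Fin n → ℝ, ∃ (t : Fin n → ℝ) (j : Fin N),
      norm1 (y + Mm.mulVec t) ≤ cc j ⬝ᵥ y + dd j := by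
    intro y
    obtain ⟨t, j, hall⟩ := R2 y
    refine ⟨t, j, ?_⟩
    obtain ⟨σ, hσ⟩ := sgn_dot_eq Finset.univ (y + Mm.mulVec t)
    rw [univNe, univNe] at hσ
    have h1 := hall σ
    rw [add_zero, ← Matrix.dotProduct_mulVec, ← dotProduct_add, hσ] at h1
    exact h1
  -- the ℓ¹ distance to the kernel
  set d1 : (Fin n → ℝ) → ℝ :=
    fun y => sInf {r | ∃ kk : Fin n → ℝ, D.mulVec kk = 0 ∧ r = norm1 (y + kk)} with hd1
  have d1ne : ∀ y : Fin n → ℝ,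
      Set.Nonempty {r | ∃ kk : Fin n → ℝ, D.mulVec kk = 0 ∧ r = norm1 (y + kk)} :=
    fun y => ⟨norm1 (y + 0), 0, Matrix.mulVec_zero D, rfl⟩
  have d1bdd : ∀ y : Fin n → ℝ,
      BddBelow {r | ∃ kk : Fin n → ℝ, D.mulVec kk = 0 ∧ r = norm1 (y + kk)} := by
    intro y
    refine ⟨0, ?_⟩
    rintro r ⟨kk, hkk, rfl⟩
    exact norm1_nonneg' _
  have hd1le : ∀ (y kk : Fin n → ℝ), D.mulVec kk = 0 → d1 y ≤ norm1 (y + kk) := by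
    intro y kk hkk
    rw [hd1]
    exact csInf_le (d1bdd y) ⟨kk, hkk, rfl⟩
  have hmjd1 : ∀ (y : Fin n → ℝ) (j : Fin N), cc j ⬝ᵥ y + dd j ≤ d1 y := by
    intro y j
    rw [hd1]
    apply le_csInf (d1ne y)
    rintro r ⟨kk, hkk, rfl⟩
    have hk2 : Mm.mulVec kk = kk := by rw [hMm]; exact hMsur kk hkk
    have := R1' y kk j
    rwa [hk2] at this
  have hd1elem : ∀ y : Fin n → ℝ, ∃ j : Fin N, d1 y ≤ cc j ⬝ᵥ y + dd j := by
    intro y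
    obtain ⟨t, j, h⟩ := R2' y
    exact ⟨j, (hd1le y (Mm.mulVec t) (hMker t)).trans h⟩
  -- positivity on the affine subspace from the D-NSP
  have hPhi : ∀ u : Fin n → ℝ, D.mulVec u = 0 →
      d1 (restr T (v + u)) < norm1 (restr Tᶜ (v + u)) := by
    intro u hu
    have h1 : A.mulVec (D.mulVec (v + u)) = 0 := by
      rw [Matrix.mulVec_add, hu, add_zero]
      exact hv
    have h2 : D.mulVec (v + u) ≠ 0 := by
      rw [Matrix.mulVec_add, hu, add_zero]
      exact hv0
    obtain ⟨ut, hut, hlt⟩ := hDNSP T hT (v + u) h1 h2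
    exact lt_of_le_of_lt (hd1le _ ut hut) hlt
  -- FM positivity, one instance per dual functional index j
  have hFj : ∀ j : Fin N, ∃ ee : ℝ, 0 < ee ∧ ∀ θ : Fin n → ℝ,
      ee ≤ norm1 (restr Tᶜ (v + Mm.mulVec θ))
        - (cc j ⬝ᵥ restr T (v + Mm.mulVec θ) + dd j) := by
    intro j
    set aa : (Fin n → Bool) → Fin 0 → ℝ := fun _ => 0 with haa
    set αα : (Fin n → Bool) → Fin n → ℝ := fun σ =>
      Mm.vecMul (restr Tᶜ (fun i => if σ i then (1:ℝ) else -1)) - Mm.vecMul (restr T (cc j))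
      with hαα
    set bb : (Fin n → Bool) → ℝ := fun σ =>
      restr Tᶜ (fun i => if σ i then (1:ℝ) else -1) ⬝ᵥ v - (restr T (cc j) ⬝ᵥ v + dd j)
      with hbb
    have hval : ∀ (σ : Fin n → Bool) (y : Fin 0 → ℝ) (θ : Fin n → ℝ),
        aa σ ⬝ᵥ y + αα σ ⬝ᵥ θ + bb σ
          = restr Tᶜ (fun i => if σ i then (1:ℝ) else -1) ⬝ᵥ (v + Mm.mulVec θ)
            - (cc j ⬝ᵥ restr T (v + Mm.mulVec θ) + dd j) := by
      intro σ y θ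
      have h0 : aa σ ⬝ᵥ y = 0 := by
        rw [haa]
        simp [dotProduct]
      rw [h0, zero_add, hαα, hbb]
      rw [sub_dotProduct, ← Matrix.dotProduct_mulVec, ← Matrix.dotProduct_mulVec]
      simp only [dot_restr', dotProduct_add]
      ring
    have hpos : ∀ θ : Fin n → ℝ, 0 < norm1 (restr Tᶜ (v + Mm.mulVec θ))
        - (cc j ⬝ᵥ restr T (v + Mm.mulVec θ) + dd j) := by
      intro θ
      have h1 := hPhi (Mm.mulVec θ) (hMker θ)
      have h2 := hmjd1 (restr T (v + Mm.mulVec θ)) j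
      linarith
    have happ2 : ∀ (y : Fin 0 → ℝ) (θ : Fin n → ℝ), ∃ σ : Fin n → Bool,
        0 ≤ aa σ ⬝ᵥ y + αα σ ⬝ᵥ θ + bb σ := by
      intro y θ
      obtain ⟨σ, hσ⟩ := sgn_dot_eq Tᶜ (v + Mm.mulVec θ)
      refine ⟨σ, ?_⟩
      rw [hval σ y θ, hσ]
      linarith [hpos θ]
    obtain ⟨N2, c2, d2, Q1, Q2⟩ := fm_lemma n 0 (Fin n → Bool) aa αα bb happ2
    obtain ⟨θ0, j2, hall⟩ := Q2 0
    refine ⟨c2 j2 ⬝ᵥ 0 + d2 j2, ?_, ?_⟩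
    · obtain ⟨σ, hσ⟩ := sgn_dot_eq Tᶜ (v + Mm.mulVec θ0)
      have h1 := hall σ
      rw [hval σ 0 θ0, hσ] at h1
      linarith [hpos θ0]
    · intro θ
      obtain ⟨σ, hσle⟩ := Q1 0 θ j2
      rw [hval σ 0 θ] at hσle
      have h2 := sgn_dot_le Tᶜ σ (v + Mm.mulVec θ)
      linarith
  choose εf hεfpos hεfB using hFj
  -- N is positive
  obtain ⟨t0, j0, -⟩ := R2' 0
  set ε := Finset.univ.inf' ⟨j0, Finset.mem_univ j0⟩ εf with hε
  have hε0 : 0 < ε := by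
    rw [hε]
    exact (Finset.lt_inf'_iff _).mpr fun i _ => hεfpos i
  have hεle : ∀ jj : Fin N, ε ≤ εf jj := by
    intro jj
    rw [hε]
    exact Finset.inf'_le _ (Finset.mem_univ jj)
  -- the central uniform bound on the affine subspace
  have hcore : ∀ u : Fin n → ℝ, D.mulVec u = 0 →
      ε ≤ norm1 (restr Tᶜ (v + u)) - d1 (restr T (v + u)) := by
    intro u hu
    have hu2 : Mm.mulVec u = u := by rw [hMm]; exact hMsur u hu
    obtain ⟨j, hj⟩ := hd1elem (restr T (v + u))
    have h1 := hεfB j u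
    rw [hu2] at h1
    have h2 := hεle j
    linarith
  -- scaling of d1
  have hd1smul : ∀ t : ℝ, 0 < t → ∀ y : Fin n → ℝ, d1 (t • y) = t * d1 y := by
    intro t ht y
    have hset : {r | ∃ kk : Fin n → ℝ, D.mulVec kk = 0 ∧ r = norm1 (t • y + kk)}
        = (fun r => t * r) '' {r | ∃ kk : Fin n → ℝ, D.mulVec kk = 0 ∧ r = norm1 (y + kk)} := by
      ext r
      constructor
      · rintro ⟨kk, hkk, rfl⟩
        refine ⟨norm1 (y + t⁻¹ • kk), ⟨t⁻¹ • kk, ?_, rfl⟩, ?_⟩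
        · rw [Matrix.mulVec_smul, hkk, smul_zero]
        · show t * norm1 (y + t⁻¹ • kk) = norm1 (t • y + kk)
          rw [← norm1_smul' t ht.le, smul_add, smul_smul, mul_inv_cancel₀ ht.ne', one_smul]
      · rintro ⟨x, ⟨kk, hkk, rfl⟩, rfl⟩
        refine ⟨t • kk, ?_, ?_⟩
        · rw [Matrix.mulVec_smul, hkk, smul_zero]
        · show t * norm1 (y + kk) = norm1 (t • y + t • kk)
          rw [← smul_add, norm1_smul' t ht.le]
    simp only [hd1]
    rw [hset, sInf_smul_set t ht _ (d1ne y) (d1bdd y)]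
  -- conclusion
  refine lt_of_lt_of_le hε0 (le_csInf ?_ ?_)
  · exact ⟨(1 / (1:ℝ)) * sSup {q : ℝ | ∃ ut : Fin n → ℝ, D.mulVec ut = 0 ∧
      q = norm1 (restr Tᶜ ((1:ℝ) • v + 0)) - norm1 (restr T ((1:ℝ) • v + 0) + ut)},
      0, 1, Matrix.mulVec_zero D, one_pos, rfl⟩
  · rintro r ⟨u, t, hu, ht, rfl⟩
    set w : Fin n → ℝ := t • v + u with hw
    have hu' : D.mulVec (t⁻¹ • u) = 0 := by rw [Matrix.mulVec_smul, hu, smul_zero]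
    have hxw : w = t • (v + t⁻¹ • u) := by
      rw [hw, smul_add, smul_smul, mul_inv_cancel₀ ht.ne', one_smul]
    have hQbdd : BddAbove {q : ℝ | ∃ ut : Fin n → ℝ, D.mulVec ut = 0 ∧
        q = norm1 (restr Tᶜ w) - norm1 (restr T w + ut)} := by
      refine ⟨norm1 (restr Tᶜ w), ?_⟩
      rintro x ⟨ut, hut, rfl⟩
      linarith [norm1_nonneg' (restr T w + ut)]
    obtain ⟨t2, j2, hR2⟩ := R2' (restr T w)
    have helem : norm1 (restr Tᶜ w) - norm1 (restr T w + Mm.mulVec t2)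
        ∈ {q : ℝ | ∃ ut : Fin n → ℝ, D.mulVec ut = 0 ∧
          q = norm1 (restr Tᶜ w) - norm1 (restr T w + ut)} := ⟨Mm.mulVec t2, hMker t2, rfl⟩
    have h1 : norm1 (restr Tᶜ w) - d1 (restr T w)
        ≤ sSup {q : ℝ | ∃ ut : Fin n → ℝ, D.mulVec ut = 0 ∧
          q = norm1 (restr Tᶜ w) - norm1 (restr T w + ut)} := by
      have h3 := hmjd1 (restr T w) j2
      have h4 := le_csSup hQbdd helem
      linarith
    have h5 := hcore (t⁻¹ • u) hu'
    have h6 : norm1 (restr Tᶜ w) = t * norm1 (restr Tᶜ (v + t⁻¹ • u)) := by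
      rw [hxw, restr_smul', norm1_smul' t ht.le]
    have h7 : d1 (restr T w) = t * d1 (restr T (v + t⁻¹ • u)) := by
      rw [hxw, restr_smul', hd1smul t ht]
    have h8 : t * ε ≤ sSup {q : ℝ | ∃ ut : Fin n → ℝ, D.mulVec ut = 0 ∧
        q = norm1 (restr Tᶜ w) - norm1 (restr T w + ut)} := by
      have h9 : t * ε ≤ t * (norm1 (restr Tᶜ (v + t⁻¹ • u)) - d1 (restr T (v + t⁻¹ • u))) :=
        mul_le_mul_of_nonneg_left h5 ht.le
      rw [mul_sub, ← h6, ← h7] at h9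
      linarith
    calc ε = (1 / t) * (t * ε) := by field_simp
      _ ≤ (1 / t) * sSup {q : ℝ | ∃ ut : Fin n → ℝ, D.mulVec ut = 0 ∧
          q = norm1 (restr Tᶜ w) - norm1 (restr T w + ut)} :=
        mul_le_mul_of_nonneg_left h8 (by positivity)
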